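/- arXiv:2409.08911 — 2 statements merged into one kernel-verified Lean document; each statement's English description precedes it below -/
import Mathlib

section
/- For every integer a and every prime p and every positive integer m, the p-adic valuation of a^(p^m) - a equals the p-adic valuation of a^p - a. -/
open Finset

private lemma key_step (p : ℕ) (hp : p.Prime) (x y : ℤ) (k : ℕ) (hk : 1 ≤ k)
    (h : (p : ℤ) ^ k ∣ x - y) : (p : ℤ) ^ (k + 1) ∣ x ^ p - y ^ p := by
  have hxy : (p : ℤ) ∣ x - y := dvd_trans (dvd_pow_self _ (by omega)) h
  have hsum : (p : ℤ) ∣ ∑ i ∈ range p, x ^ i * y ^ (p - 1 - i) := by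
    haveI : Fact p.Prime := ⟨hp⟩
    have : ((∑ i ∈ range p, x ^ i * y ^ (p - 1 - i) : ℤ) : ZMod p) = 0 := by
      push_cast
      have hxy' : ((x : ZMod p)) = (y : ZMod p) := by
        have := (ZMod.intCast_zmod_eq_zero_iff_dvd (x - y) p).2 hxy
        push_cast at this
        linear_combination this
      rw [Finset.sum_congr rfl (fun i hi => by rw [hxy'])]
      have : ∀ i ∈ range p, ((y : ZMod p)) ^ i * (y : ZMod p) ^ (p - 1 - i)
          = (y : ZMod p) ^ (p - 1) := by
        intro i hi
        rw [← pow_add]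
        congr 1
        have := Finset.mem_range.1 hi
        omega
      rw [Finset.sum_congr rfl this, Finset.sum_const, card_range, nsmul_eq_mul]
      simp [ZMod.natCast_self]
    exact_mod_cast (ZMod.intCast_zmod_eq_zero_iff_dvd _ p).1 this
  have := mul_dvd_mul hsum h
  rw [← geom_sum₂_mul x y p] at *
  calc (p:ℤ)^(k+1) = (p:ℤ) * (p:ℤ)^k := by ring
  _ ∣ _ := this

theorem wieferich_exponent_doesnt_matter (p : ℕ) (hp : p.Prime) (a : ℤ) (m : ℕ) (hm : 1 ≤ m) :
    emultiplicity (p : ℤ) (a ^ (p ^ m) - a) = emultiplicity (p : ℤ) (a ^ p - a) := by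
  haveI : Fact p.Prime := ⟨hp⟩
  have hppos := hp.pos
  -- case a^p = a
  by_cases hd : a ^ p - a = 0
  · have hpa : a ^ p = a := by linarith [hd]
    have : ∀ k, a ^ (p ^ k) = a := by
      intro k
      induction k with
      | zero => simp
      | succ k ih => rw [pow_succ, pow_mul, ih, hpa]
    rw [this m, hpa]
  · -- finite multiplicity
    have hfin : FiniteMultiplicity (p : ℤ) (a ^ p - a) :=
      Int.finiteMultiplicity_iff.2 ⟨by simpa using hp.one_lt.ne', hd⟩
    set n := multiplicity (p : ℤ) (a ^ p - a) with hn
    have hdvd : (p : ℤ) ^ n ∣ a ^ p - a := pow_multiplicity_dvd _ _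
    have hndvd : ¬ (p : ℤ) ^ (n + 1) ∣ a ^ p - a := hfin.not_pow_dvd_of_multiplicity_lt (by omega)
    -- Fermat: p ∣ a^p - a
    have hfermat : (p : ℤ) ∣ a ^ p - a := by
      have : ((a ^ p - a : ℤ) : ZMod p) = 0 := by
        push_cast
        rw [ZMod.pow_card]
        ring
      exact_mod_cast (ZMod.intCast_zmod_eq_zero_iff_dvd _ p).1 this
    have hn1 : 1 ≤ n := by
      by_contra h
      have hn0 : n = 0 := by omega
      apply hndvd
      rw [hn0]; simpa using hfermat
    -- claim: p^(n+1) ∣ a^(p^(k+1)) - a^p for all k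
    have claim : ∀ k, (p : ℤ) ^ (n + 1) ∣ a ^ (p ^ (k + 1)) - a ^ p := by
      intro k
      induction k with
      | zero => simp
      | succ k ih =>
        have h1 : (p : ℤ) ^ n ∣ a ^ (p ^ (k + 1)) - a := by
          have : a ^ (p ^ (k+1)) - a = (a ^ (p ^ (k + 1)) - a ^ p) + (a ^ p - a) := by ring
          rw [this]
          exact dvd_add (dvd_trans (pow_dvd_pow _ (by omega)) ih) hdvd
        have h2 := key_step p hp (a ^ (p ^ (k+1))) a n hn1 h1
        rw [← pow_mul, ← pow_succ] at h2
        exact h2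
    obtain ⟨k, hk⟩ : ∃ k, m = k + 1 := ⟨m - 1, by omega⟩
    subst hk
    have hsplit : a ^ (p ^ (k + 1)) - a = (a ^ (p ^ (k + 1)) - a ^ p) + (a ^ p - a) := by ring
    rw [hsplit]
    apply emultiplicity_add_of_gt
    have hle : ((n + 1 : ℕ) : ℕ∞) ≤ emultiplicity (p : ℤ) (a ^ (p ^ (k + 1)) - a ^ p) :=
      pow_dvd_iff_le_emultiplicity.1 (claim k)
    have heq : emultiplicity (p : ℤ) (a ^ p - a) = (n : ℕ∞) := hfin.emultiplicity_eq_multiplicity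
    rw [heq]
    calc (n : ℕ∞) < ((n + 1 : ℕ) : ℕ∞) := by exact_mod_cast Nat.lt_succ_self n
    _ ≤ _ := hle
end

section
/- Let K be a field, n ≥ 2, and a a nonzero element of K. If for all primes p dividing n we have a ∉ K^p, and if 4 ∣ n then a ∉ -4K^4, then x^n - a is irreducible in K[x]. -/
open Polynomial IntermediateField

universe u

/-- Key computation: if `α` has minimal polynomial `X^2 - a` over `K` and `u·α`
(with `u = ±1`) is a square in `L = K(α)`, then `a ∈ -4K⁴`. -/
lemma key_sq {K L : Type*} [Field K] [Field L] [Algebra K L]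
    (PB : PowerBasis K L) (a u : K) (hu : u ^ 2 = 1)
    (hmin : minpoly K PB.gen = X ^ 2 - C a)
    (b : L) (hb : b ^ 2 = algebraMap K L u * PB.gen) :
    ∃ k : K, a = -4 * k ^ 4 := by
  have halg2 : PB.gen ^ 2 = algebraMap K L a := by
    have h0 := minpoly.aeval K PB.gen
    rw [hmin] at h0
    simpa [sub_eq_zero] using h0
  have hdim : PB.dim = 2 := by
    rw [← PB.natDegree_minpoly, hmin, natDegree_X_pow_sub_C]
  have hnr : ∀ k : K, PB.gen ≠ algebraMap K L k := by
    intro k hk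
    have h1 : minpoly K PB.gen = X - C k := by rw [hk, minpoly.eq_X_sub_C]
    rw [hmin] at h1
    have := congrArg natDegree h1
    simp [natDegree_X_pow_sub_C] at this
  have hlin : ∀ e f : K, algebraMap K L e + algebraMap K L f * PB.gen = 0 → e = 0 ∧ f = 0 := by
    intro e f hef
    have hf : f = 0 := by
      by_contra hf
      have hf' : algebraMap K L f ≠ 0 := fun h => hf ((algebraMap K L).injective (by simpa using h))
      apply hnr (-e / f)
      rw [map_div₀, map_neg, eq_div_iff hf']
      linear_combination hef
    refine ⟨?_, hf⟩
    rw [hf, map_zero, zero_mul, add_zero] at hef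
    exact (algebraMap K L).injective (by simpa using hef)
  obtain ⟨g, hg, rfl⟩ := PB.exists_eq_aeval b
  rw [hdim] at hg
  set c := g.coeff 0 with hc
  set d := g.coeff 1 with hd
  have hgeq : g = C d * X + C c := eq_X_add_C_of_natDegree_le_one (by omega)
  rw [hgeq] at hb
  simp only [map_add, map_mul, aeval_X, aeval_C] at hb
  have heq : algebraMap K L (c ^ 2 + a * d ^ 2) + algebraMap K L (2 * c * d - u) * PB.gen = 0 := by
    push_cast [map_add, map_mul, map_sub, map_pow, map_ofNat]
    linear_combination hb - (algebraMap K L d) ^ 2 * halg2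
  obtain ⟨h1, h2⟩ := hlin _ _ heq
  have h2' : 2 * c * d = u := by linear_combination h2
  have hsq : 4 * c ^ 2 * d ^ 2 = 1 := by
    have := congrArg (· ^ 2) h2'
    rw [hu] at this
    linear_combination this
  exact ⟨c, by linear_combination (4 * c ^ 2) * h1 - a * hsq⟩

theorem pow2_irred : ∀ (s : ℕ) (K : Type u) [Field K] (a : K), a ≠ 0 →
    (1 ≤ s → ∀ b : K, b ^ 2 ≠ a) →
    (2 ≤ s → ∀ b : K, a ≠ -4 * b ^ 4) →
    Irreducible (X ^ (2 ^ s : ℕ) - C a) := by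
  intro s
  induction s with
  | zero =>
    intro K _ a _ _ _
    simpa using irreducible_X_sub_C a
  | succ s IH =>
    intro K _ a ha hsq h4
    rcases Nat.eq_zero_or_pos s with rfl | hs
    · simpa using X_pow_sub_C_irreducible_of_prime Nat.prime_two (hsq le_rfl)
    have h2irr : Irreducible (X ^ 2 - C a) :=
      X_pow_sub_C_irreducible_of_prime Nat.prime_two (hsq (by omega))
    have key := X_pow_mul_sub_C_irreducible (n := 2 ^ s) (m := 2) h2irr ?_
    · rwa [← pow_succ] at key
    intro E _ _ x hx
    have hxint : IsIntegral K x := by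
      by_contra h
      rw [minpoly.eq_zero h] at hx
      exact (monic_X_pow_sub_C a (two_ne_zero)).ne_zero hx.symm
    set L := K⟮x⟯
    set PB := IntermediateField.adjoin.powerBasis hxint with hPB
    have hgen : PB.gen = AdjoinSimple.gen K x := IntermediateField.adjoin.powerBasis_gen hxint
    have hmin : minpoly K PB.gen = X ^ 2 - C a := by
      rw [hgen, IntermediateField.minpoly_gen, hx]
    have hga : PB.gen ^ 2 = algebraMap K L a := by
      have h0 := minpoly.aeval K PB.gen
      rw [hmin] at h0
      simpa [sub_eq_zero] using h0
    rw [← hgen]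
    apply IH L PB.gen
    · intro h0
      rw [h0, zero_pow two_ne_zero] at hga
      exact ha ((algebraMap K L).injective (by simpa using hga.symm))
    · intro _ b hb
      obtain ⟨k, hk⟩ := key_sq PB a 1 (one_pow 2) hmin b (by rw [map_one, one_mul]; exact hb)
      exact h4 (by omega) k hk
    · intro hs2 b hb
      have hb' : ((2 : L) * b ^ 2) ^ 2 = algebraMap K L (-1) * PB.gen := by
        rw [map_neg, map_one, hb]; ring
      obtain ⟨k, hk⟩ := key_sq PB a (-1) (by ring) hmin _ hb'
      exact h4 (by omega) k hk

theorem lang_irreducibility (K : Type*) [Field K] (n : ℕ) (hn : 2 ≤ n) (a : K) (ha : a ≠ 0)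
    (h1 : ∀ p : ℕ, p.Prime → p ∣ n → ¬ ∃ k : K, k ^ p = a)
    (h2 : 4 ∣ n → ¬ ∃ k : K, a = -4 * k ^ 4) :
    Irreducible (X ^ n - C a) := by
  have hn0 : n ≠ 0 := by omega
  set s := n.factorization 2 with hs
  set m := n / 2 ^ s with hm
  have hmd : ¬ 2 ∣ m := Nat.not_dvd_ordCompl Nat.prime_two hn0
  have hnm : 2 ^ s * m = n := Nat.ordProj_mul_ordCompl_eq_self n 2
  have hmodd : Odd m := Nat.odd_iff.mpr (Nat.two_dvd_ne_zero.mp hmd)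
  have hm0 : m ≠ 0 := fun h0 => hmd (by omega)
  have hmdvd : m ∣ n := Dvd.intro_left (2 ^ s) hnm
  have hmirr : Irreducible (X ^ m - C a) :=
    X_pow_sub_C_irreducible_of_odd hmodd fun p hp hpm b hb =>
      h1 p hp (hpm.trans hmdvd) ⟨b, hb⟩
  have key := X_pow_mul_sub_C_irreducible (n := 2 ^ s) (m := m) hmirr ?_
  · rwa [hnm] at key
  intro E _ _ x hx
  have hxint : IsIntegral K x := by
    by_contra h
    rw [minpoly.eq_zero h] at hx
    exact (monic_X_pow_sub_C a hm0).ne_zero hx.symm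
  set L := K⟮x⟯
  haveI : FiniteDimensional K L := IntermediateField.adjoin.finiteDimensional hxint
  have hfr : Module.finrank K L = m := by
    rw [IntermediateField.adjoin.finrank hxint, hx, natDegree_X_pow_sub_C]
  have hgm : (AdjoinSimple.gen K x) ^ m = algebraMap K L a := by
    have h0 := IntermediateField.aeval_gen_minpoly K x
    rw [hx] at h0
    simpa [sub_eq_zero] using h0
  have hNg : Algebra.norm K (AdjoinSimple.gen K x) = a := by
    rw [← IntermediateField.adjoin.powerBasis_gen hxint,
      Algebra.PowerBasis.norm_gen_eq_coeff_zero_minpoly]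
    rw [IntermediateField.adjoin.powerBasis_gen hxint, IntermediateField.minpoly_gen, hx]
    have hdim : (IntermediateField.adjoin.powerBasis hxint).dim = m := by
      rw [← PowerBasis.natDegree_minpoly, IntermediateField.adjoin.powerBasis_gen hxint,
        IntermediateField.minpoly_gen, hx, natDegree_X_pow_sub_C]
    rw [hdim]
    simp [coeff_X_pow, hm0, hmodd.neg_one_pow]
    omega
  apply pow2_irred s L (AdjoinSimple.gen K x)
  · intro h0
    rw [h0, zero_pow hm0] at hgm
    exact ha ((algebraMap K L).injective (by simpa using hgm.symm))
  · intro hs1 b hb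
    refine h1 2 Nat.prime_two
      (dvd_trans (dvd_pow_self 2 (by omega : s ≠ 0)) ⟨m, hnm.symm⟩) ⟨Algebra.norm K b, ?_⟩
    rw [← map_pow, hb, hNg]
  · intro hs2 b hb
    obtain ⟨t, ht⟩ := hmodd
    have h42s : (4 : ℕ) ∣ 2 ^ s := by
      have h22 : (2 : ℕ) ^ 2 ∣ 2 ^ s := pow_dvd_pow 2 hs2
      simpa using h22
    refine h2 (dvd_trans h42s ⟨m, hnm.symm⟩) ⟨2 ^ t * Algebra.norm K b, ?_⟩
    have hNgb : a = (-4 : K) ^ m * (Algebra.norm K b) ^ 4 := by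
      have hc4 : (-4 : ↥L) = algebraMap K L (-4) := by rw [map_neg, map_ofNat]
      rw [← hNg, hb, map_mul, map_pow, hc4, Algebra.norm_algebraMap, hfr]
    have h16 : ((-4 : K)) ^ (2 * t + 1) = -4 * ((2 : K) ^ t) ^ 4 := by
      have ht4 : ((2 : K) ^ t) ^ 4 = (16 : K) ^ t := by
        rw [← pow_mul, mul_comm, pow_mul]; norm_num
      rw [pow_succ, pow_mul, ht4]
      norm_num [mul_comm]
    rw [hNgb, ht, h16]; ring
end
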